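/- Suppose s : ℕ → ℝ is a positive sequence that is weakly submultiplicative: for all ℓ, m, n ≥ 1 with ℓ + m = n and n/3 ≤ ℓ ≤ 2n/3 and n/3 ≤ m ≤ 2n/3, we have s(n) ≤ s(ℓ)·s(m). Then lim_{n→∞} s(n)^{1/n} exists and equals inf_{n≥1} s(n)^{1/n}. -/

import Mathlib

open Filter Real

private lemma stmt5_key (s : ℕ → ℝ) (hpos : ∀ n, 1 ≤ n → 0 < s n)
    (hsub : ∀ ℓ m n : ℕ, 1 ≤ ℓ → 1 ≤ m → ℓ + m = n →
      (n : ℝ) / 3 ≤ (ℓ : ℝ) → (ℓ : ℝ) ≤ 2 * (n : ℝ) / 3 →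
      (n : ℝ) / 3 ≤ (m : ℝ) → (m : ℝ) ≤ 2 * (n : ℝ) / 3 →
      s n ≤ s ℓ * s m) (k : ℕ) (hk : 1 ≤ k) :
    ∀ q r : ℕ, k ≤ r → r + 1 ≤ 2 * k → s (q * k + r) ≤ s k ^ q * s r := by
  intro q
  induction q using Nat.strong_induction_on with
  | _ q IH =>
    intro r hr1 hr2
    rcases Nat.eq_zero_or_pos q with h0 | hq
    · subst h0; simp
    obtain ⟨d, hd⟩ : ∃ d, (q + 2) / 2 = d + 1 := ⟨(q + 2) / 2 - 1, by omega⟩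
    set q1 : ℕ := d + 1 with hq1def
    have hfacts : 1 ≤ q1 ∧ q1 ≤ q ∧ q + 1 ≤ 2 * q1 ∧ 2 * q1 ≤ q + 2 := by omega
    set N : ℕ := q * k + r with hN
    set A : ℕ := q1 * k with hA
    set B : ℕ := (q - q1) * k + r with hB
    have hABsum : A + B = N := by
      have h1 : q1 * k + (q - q1) * k = q * k := by
        rw [← Nat.add_mul]; congr 1; omega
      simp only [hA, hB, hN]; omega
    have hA1 : 1 ≤ A := by
      have : 1 * 1 ≤ q1 * k := Nat.mul_le_mul hfacts.1 hk
      omega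
    have hB1 : 1 ≤ B := by omega
    have hN3A : N ≤ 3 * A := by
      calc N = q * k + r := rfl
        _ ≤ q * k + 2 * k := by omega
        _ = (q + 2) * k := by ring
        _ ≤ (3 * q1) * k := Nat.mul_le_mul_right k (by omega)
        _ = 3 * (q1 * k) := by ring
    have h3A2N : 3 * A ≤ 2 * N := by
      calc 3 * A = (3 * q1) * k := by rw [hA]; ring
        _ ≤ (2 * q + 2) * k := Nat.mul_le_mul_right k (by omega)
        _ = 2 * (q * k) + 2 * k := by ring
        _ ≤ 2 * (q * k) + 2 * r := by omega
        _ = 2 * N := by rw [hN]; ring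
    have hcast : (A : ℝ) + (B : ℝ) = (N : ℝ) := by exact_mod_cast congrArg (Nat.cast (R := ℝ)) hABsum
    have hN3A' : (N : ℝ) ≤ 3 * (A : ℝ) := by exact_mod_cast hN3A
    have h3A2N' : 3 * (A : ℝ) ≤ 2 * (N : ℝ) := by exact_mod_cast h3A2N
    have hmain : s N ≤ s A * s B := by
      apply hsub A B N hA1 hB1 hABsum
      · linarith
      · linarith
      · linarith
      · linarith
    have hIHA : s A ≤ s k ^ d * s k := by
      have := IH d (by omega) k le_rfl (by omega)
      have hAeq : A = d * k + k := by rw [hA, hq1def]; ring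
      rw [hAeq]; exact this
    have hIHB : s B ≤ s k ^ (q - q1) * s r := IH (q - q1) (by omega) r hr1 hr2
    have hsk : 0 < s k := hpos k hk
    have hsr : 0 < s r := hpos r (by omega)
    have hsB : 0 < s B := hpos B hB1
    have hexp : d + 1 + (q - q1) = q := by omega
    calc s (q * k + r) = s N := rfl
      _ ≤ s A * s B := hmain
      _ ≤ (s k ^ d * s k) * (s k ^ (q - q1) * s r) := by
          apply mul_le_mul hIHA hIHB hsB.le (by positivity)
      _ = (s k ^ (d + 1) * s k ^ (q - q1)) * s r := by ring
      _ = s k ^ q * s r := by rw [← pow_add, hexp]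

theorem stmt5 (s : ℕ → ℝ) (hpos : ∀ n, 1 ≤ n → 0 < s n)
    (hsub : ∀ ℓ m n : ℕ, 1 ≤ ℓ → 1 ≤ m → ℓ + m = n →
      (n : ℝ) / 3 ≤ (ℓ : ℝ) → (ℓ : ℝ) ≤ 2 * (n : ℝ) / 3 →
      (n : ℝ) / 3 ≤ (m : ℝ) → (m : ℝ) ≤ 2 * (n : ℝ) / 3 →
      s n ≤ s ℓ * s m) :
    Filter.Tendsto (fun n : ℕ => s n ^ (1 / (n : ℝ))) Filter.atTop
      (nhds (⨅ n : {n : ℕ // 1 ≤ n}, s n ^ (1 / ((n : ℕ) : ℝ)))) := by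
  haveI : Nonempty {n : ℕ // 1 ≤ n} := ⟨⟨1, le_rfl⟩⟩
  set I : ℝ := ⨅ n : {n : ℕ // 1 ≤ n}, s n ^ (1 / ((n : ℕ) : ℝ)) with hI
  have hbdd : BddBelow (Set.range fun p : {n : ℕ // 1 ≤ n} => s p ^ (1 / ((p : ℕ) : ℝ))) := by
    refine ⟨0, ?_⟩
    rintro x ⟨p, rfl⟩
    exact Real.rpow_nonneg (hpos p p.2).le _
  rw [tendsto_order]
  constructor
  · intro a ha
    filter_upwards [eventually_ge_atTop 1] with n hn
    have : I ≤ s n ^ (1 / (n : ℝ)) := ciInf_le hbdd ⟨n, hn⟩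
    linarith
  · intro a ha
    obtain ⟨⟨k, hk⟩, hka⟩ := exists_lt_of_ciInf_lt ha
    set c : ℝ := s k ^ (1 / (k : ℝ)) with hc
    have hka' : c < a := by simpa using hka
    have hsk : 0 < s k := hpos k hk
    have hc0 : 0 < c := Real.rpow_pos_of_pos hsk _
    have hkR : (0 : ℝ) < (k : ℝ) := by exact_mod_cast hk
    have hne : (Finset.Ico k (2 * k)).Nonempty := ⟨k, by simp; omega⟩
    set M : ℝ := (Finset.Ico k (2 * k)).sup' hne (fun j => max 1 (s j)) with hM
    have hM1 : 1 ≤ M := by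
      rw [hM]
      exact le_trans (le_max_left 1 (s k))
        (Finset.le_sup' (fun j => max 1 (s j)) (by simp; omega : k ∈ Finset.Ico k (2 * k)))
    set C : ℝ := (max c⁻¹ 1) ^ (2 * k) * M with hC
    have hmax1 : (1 : ℝ) ≤ max c⁻¹ 1 := le_max_right _ _
    have hC1 : (1 : ℝ) ≤ C := by
      calc (1 : ℝ) = 1 ^ (2 * k) * 1 := by simp
        _ ≤ (max c⁻¹ 1) ^ (2 * k) * M :=
            mul_le_mul (pow_le_pow_left₀ zero_le_one hmax1 _) hM1 zero_le_one (by positivity)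
    have hC0 : 0 < C := lt_of_lt_of_le zero_lt_one hC1
    -- auxiliary: c ^ x = s k ^ (x / k)
    have hcx : ∀ x : ℝ, c ^ x = s k ^ (x / (k : ℝ)) := by
      intro x
      rw [hc, ← Real.rpow_mul hsk.le]
      congr 1
      field_simp
    have hbound : ∀ n : ℕ, 2 * k ≤ n → s n ^ (1 / (n : ℝ)) ≤ c * C ^ (1 / (n : ℝ)) := by
      intro n hn
      have hn1 : 1 ≤ n := by omega
      have hnR : (0 : ℝ) < (n : ℝ) := by exact_mod_cast hn1
      set m : ℕ := n / k with hm
      set t : ℕ := n % k with ht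
      have hmt : k * m + t = n := Nat.div_add_mod n k
      have htk : t < k := Nat.mod_lt n (by omega)
      have hm2 : 2 ≤ m := by
        rw [hm, Nat.le_div_iff_mul_le (by omega)]; omega
      have hkey : s n ≤ s k ^ (m - 1) * s (k + t) := by
        have h := stmt5_key s hpos hsub k hk (m - 1) (k + t) (by omega) (by omega)
        have heq : (m - 1) * k + (k + t) = n := by
          have h2 : (m - 1) * k + k = m * k := by
            have : m - 1 + 1 = m := by omega
            calc (m - 1) * k + k = (m - 1 + 1) * k := by ring
              _ = m * k := by rw [this]
          have h3 : m * k = k * m := Nat.mul_comm m k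
          omega
        rwa [heq] at h
      have hskt : 0 < s (k + t) := hpos (k + t) (by omega)
      have h1n : (0 : ℝ) ≤ 1 / (n : ℝ) := by positivity
      have hcastmt : (k : ℝ) * (m : ℝ) + (t : ℝ) = (n : ℝ) := by exact_mod_cast hmt
      have hmr : ((m - 1 : ℕ) : ℝ) = (m : ℝ) - 1 := by
        have h1 : (1 : ℕ) ≤ m := by omega
        push_cast [h1]; ring
      -- the blob (c⁻¹)^(k+t) as an rpow of c
      have hblob : (((c⁻¹) ^ (k + t) : ℝ)) ^ (1 / (n : ℝ)) = c ^ (-(((k + t : ℕ)) : ℝ) / (n : ℝ)) := by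
        rw [← Real.rpow_natCast c⁻¹ (k + t), ← Real.rpow_neg_one c,
          ← Real.rpow_mul hc0.le, ← Real.rpow_mul hc0.le]
        congr 1
        push_cast
        ring
      have hkmkey : ((m : ℝ) - 1) * (k : ℝ) = (n : ℝ) - ((k : ℝ) + (t : ℝ)) := by
        linear_combination hcastmt
      have e3 : (s k ^ (((m - 1 : ℕ)) : ℝ)) ^ (1 / (n : ℝ))
          = c * ((c⁻¹) ^ (k + t)) ^ (1 / (n : ℝ)) := by
        rw [hblob, ← Real.rpow_mul hsk.le, hcx, hc, ← Real.rpow_add hsk]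
        congr 1
        rw [hmr]
        push_cast
        have hn0 : (n : ℝ) ≠ 0 := ne_of_gt hnR
        have hk0 : (k : ℝ) ≠ 0 := ne_of_gt hkR
        field_simp
        linear_combination hkmkey
      calc s n ^ (1 / (n : ℝ))
          ≤ (s k ^ (m - 1) * s (k + t)) ^ (1 / (n : ℝ)) :=
            Real.rpow_le_rpow (hpos n hn1).le hkey h1n
        _ = (s k ^ (((m - 1 : ℕ)) : ℝ)) ^ (1 / (n : ℝ)) * (s (k + t)) ^ (1 / (n : ℝ)) := by
            rw [Real.mul_rpow (by positivity) hskt.le, Real.rpow_natCast]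
        _ = c * ((c⁻¹) ^ (k + t)) ^ (1 / (n : ℝ)) * (s (k + t)) ^ (1 / (n : ℝ)) := by rw [e3]
        _ = c * (((c⁻¹) ^ (k + t) * s (k + t))) ^ (1 / (n : ℝ)) := by
            rw [Real.mul_rpow (by positivity) hskt.le]; ring
        _ ≤ c * C ^ (1 / (n : ℝ)) := by
            have hbase : (c⁻¹) ^ (k + t) * s (k + t) ≤ C := by
              have h1 : (c⁻¹) ^ (k + t) ≤ (max c⁻¹ 1) ^ (2 * k) := by
                calc (c⁻¹) ^ (k + t) ≤ (max c⁻¹ 1) ^ (k + t) :=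
                      pow_le_pow_left₀ (by positivity) (le_max_left _ _) _
                  _ ≤ (max c⁻¹ 1) ^ (2 * k) := pow_le_pow_right₀ hmax1 (by omega)
              have h2 : s (k + t) ≤ M := by
                rw [hM]
                exact le_trans (le_max_right 1 (s (k + t)))
                  (Finset.le_sup' (fun j => max 1 (s j))
                    (by simp; omega : k + t ∈ Finset.Ico k (2 * k)))
              exact mul_le_mul h1 h2 hskt.le (by positivity)
            exact mul_le_mul_of_nonneg_left
              (Real.rpow_le_rpow (by positivity) hbase h1n) hc0.le
    have hlim : Tendsto (fun n : ℕ => c * C ^ (1 / (n : ℝ))) atTop (nhds c) := by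
      have h0 : Tendsto (fun n : ℕ => 1 / (n : ℝ)) atTop (nhds 0) :=
        tendsto_one_div_atTop_nhds_zero_nat
      have hcont : ContinuousAt (fun x : ℝ => C ^ x) 0 :=
        Real.continuousAt_const_rpow (ne_of_gt hC0)
      have h1 : Tendsto (fun n : ℕ => C ^ (1 / (n : ℝ))) atTop (nhds 1) := by
        have := hcont.tendsto.comp h0
        simpa [Real.rpow_zero, Function.comp_def] using this
      have := tendsto_const_nhds (x := c) (f := atTop (α := ℕ)) |>.mul h1
      simpa using this
    filter_upwards [eventually_ge_atTop (2 * k), hlim.eventually_lt_const hka']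
      with n h2k hlt
    exact lt_of_le_of_lt (hbound n h2k) hlt
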